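/- arXiv:1204.2834 — 3 statements merged into one kernel-verified Lean document; each statement's English description precedes it below -/
import Mathlib

section
/- Suppose L : Finset B → ℂ* satisfies L(S) = L(X) · L(Y) whenever S is the disjoint union of X and Y and there are no interactions between X and Y (multiplicativity over disjoint unions). Then the cluster correlation factors satisfy tilde-L(S) = 1 for every subset S that is a disjoint union of two nonempty non-interacting parts, provided tilde-L(C) is defined for all proper subsets and tilde-L(∅) = 1. -/
/-- If `L` is multiplicative over disjoint non-interacting unions (factorable under
disconnected interactions), then every cluster correlation factor `Lt S` equals `1`
whenever `S` is a disjoint union of two nonempty non-interacting parts. -/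
theorem cce_factor_one_of_disconnected {B : Type*} [DecidableEq B]
    (b : B → B → ℂ) (L Lt : Finset B → ℂ)
    (hne : ∀ S, Lt S ≠ 0)
    (hfact : ∀ X Y : Finset B, Disjoint X Y →
      (∀ i ∈ X, ∀ j ∈ Y, b i j = 0) → L (X ∪ Y) = L X * L Y)
    (hrec : ∀ S, Lt S = L S / ∏ C ∈ S.ssubsets, Lt C)
    (hempty : Lt ∅ = 1) :
    ∀ (S X Y : Finset B), S = X ∪ Y → Disjoint X Y → X.Nonempty → Y.Nonempty →
      (∀ i ∈ X, ∀ j ∈ Y, b i j = 0) → Lt S = 1 := by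
  intro S
  induction S using Finset.strongInduction with
  | _ S ih =>
    intro X Y hS hdisj hX hY hb
    subst hS
    -- L equals the product of Lt over the full powerset
    have hpowX : ∀ Z : Finset B, L Z = ∏ C ∈ Z.powerset, Lt C := by
      intro Z
      have hp : (∏ C ∈ Z.ssubsets, Lt C) ≠ 0 := Finset.prod_ne_zero_iff.2 fun C _ => hne C
      have h1 : Lt Z * ∏ C ∈ Z.ssubsets, Lt C = L Z := by
        rw [hrec Z]; field_simp
      have h2 : ∏ C ∈ Z.powerset, Lt C = Lt Z * ∏ C ∈ Z.ssubsets, Lt C := by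
        rw [Finset.ssubsets, ← Finset.mul_prod_erase _ _ (Finset.mem_powerset_self Z)]
      rw [h2, h1]
    have hXs : ∀ C ⊆ X, C ⊂ X ∪ Y := by
      intro C hC
      refine (Finset.ssubset_iff_of_subset (hC.trans Finset.subset_union_left)).2 ?_
      obtain ⟨y, hy⟩ := hY
      exact ⟨y, Finset.mem_union_right _ hy,
        fun h => Finset.disjoint_left.1 hdisj (hC h) hy⟩
    have hYs : ∀ C ⊆ Y, C ⊂ X ∪ Y := by
      intro C hC
      refine (Finset.ssubset_iff_of_subset (hC.trans Finset.subset_union_right)).2 ?_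
      obtain ⟨x, hx⟩ := hX
      exact ⟨x, Finset.mem_union_left _ hx,
        fun h => Finset.disjoint_left.1 hdisj hx (hC h)⟩
    have key : ∏ C ∈ (X ∪ Y).ssubsets, Lt C
        = (∏ C ∈ X.powerset, Lt C) * (∏ C ∈ Y.powerset, Lt C) := by
      have h1 : ∏ C ∈ ((X ∪ Y).ssubsets.filter (fun C => C ⊆ X ∨ C ⊆ Y)), Lt C
          = ∏ C ∈ (X ∪ Y).ssubsets, Lt C := by
        refine Finset.prod_subset (Finset.filter_subset _ _) ?_
        intro C hC hC'
        simp only [Finset.mem_filter, not_and, not_or] at hC'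
        have hCss := Finset.mem_ssubsets.1 hC
        have ⟨hnX, hnY⟩ := hC' hC
        have hCsub : C ⊆ X ∪ Y := hCss.subset
        have hXne : (C ∩ X).Nonempty := by
          by_contra h
          apply hnY
          intro a ha
          rcases Finset.mem_union.1 (hCsub ha) with h' | h'
          · exact absurd ⟨a, Finset.mem_inter.2 ⟨ha, h'⟩⟩ h
          · exact h'
        have hYne : (C ∩ Y).Nonempty := by
          by_contra h
          apply hnX
          intro a ha
          rcases Finset.mem_union.1 (hCsub ha) with h' | h'
          · exact h'
          · exact absurd ⟨a, Finset.mem_inter.2 ⟨ha, h'⟩⟩ h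
        have hCeq : C = (C ∩ X) ∪ (C ∩ Y) := by
          ext a
          simp only [Finset.mem_union, Finset.mem_inter]
          constructor
          · intro ha
            rcases Finset.mem_union.1 (hCsub ha) with h' | h'
            · exact Or.inl ⟨ha, h'⟩
            · exact Or.inr ⟨ha, h'⟩
          · rintro (⟨h, _⟩ | ⟨h, _⟩) <;> exact h
        exact ih C hCss (C ∩ X) (C ∩ Y) hCeq
          (hdisj.mono Finset.inter_subset_right Finset.inter_subset_right)
          hXne hYne
          (fun i hi j hj => hb i (Finset.mem_inter.1 hi).2 j (Finset.mem_inter.1 hj).2)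
      have h2 : (X ∪ Y).ssubsets.filter (fun C => C ⊆ X ∨ C ⊆ Y)
          = X.powerset ∪ Y.powerset := by
        ext C
        simp only [Finset.mem_filter, Finset.mem_ssubsets, Finset.mem_union,
          Finset.mem_powerset]
        constructor
        · exact fun h => h.2
        · rintro (h | h)
          · exact ⟨hXs C h, Or.inl h⟩
          · exact ⟨hYs C h, Or.inr h⟩
      have h3 : X.powerset ∩ Y.powerset = {∅} := by
        ext C
        simp only [Finset.mem_inter, Finset.mem_powerset, Finset.mem_singleton]
        constructor
        · rintro ⟨h1', h2'⟩
          have : C ⊆ X ∩ Y := Finset.subset_inter h1' h2'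
          rw [Finset.disjoint_iff_inter_eq_empty.1 hdisj] at this
          exact Finset.subset_empty.1 this
        · rintro rfl; exact ⟨Finset.empty_subset _, Finset.empty_subset _⟩
      have h4 := Finset.prod_union_inter (s₁ := X.powerset) (s₂ := Y.powerset) (f := Lt)
      rw [h3, Finset.prod_singleton, hempty, mul_one] at h4
      rw [← h1, h2, h4]
    have hLX : L X ≠ 0 := by
      rw [hpowX X]; exact Finset.prod_ne_zero_iff.2 fun C _ => hne C
    have hLY : L Y ≠ 0 := by
      rw [hpowX Y]; exact Finset.prod_ne_zero_iff.2 fun C _ => hne C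
    rw [hrec (X ∪ Y), key, ← hpowX X, ← hpowX Y, hfact X Y hdisj hb]
    field_simp
end

section
/- Let L assign to each finite subset S of B a formal power series in commuting variables b_{ij} (for unordered pairs {i,j} ⊆ B) with constant term 1, and suppose L is factorable under disconnected interactions: if S = X ⊔ Y and we set b_{ij} = 0 for all i ∈ X, j ∈ Y, then L(S) specializes to L(X)·L(Y). Define tilde-L(S) = L(S)/∏_{C ⊊ S} tilde-L(C). Then every non-constant monomial appearing in tilde-L(S) contains variables b_{ij} whose pairs {i,j}, viewed as edges on the vertex set S, form a graph in which every vertex of S lies in the same connected component, i.e., the monomial's edge set connects S fully. -/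
open MvPowerSeries Finset

namespace CCEAux
open scoped Classical

variable {B : Type*} [DecidableEq B]


noncomputable def restrictFun (E : Set (Sym2 B)) (f : MvPowerSeries (Sym2 B) ℂ) :
    MvPowerSeries (Sym2 B) ℂ :=
  fun d => if (↑d.support : Set (Sym2 B)) ⊆ E then MvPowerSeries.coeff (R := ℂ) d f else 0


lemma coeff_restrictFun (E : Set (Sym2 B)) (f : MvPowerSeries (Sym2 B) ℂ)
    (d : Sym2 B →₀ ℕ) :
    MvPowerSeries.coeff (R := ℂ) d (restrictFun E f)
      = if (↑d.support : Set (Sym2 B)) ⊆ E then MvPowerSeries.coeff (R := ℂ) d f else 0 := rfl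

lemma support_left_subset {d1 d2 d : Sym2 B →₀ ℕ} (h : d1 + d2 = d) :
    d1.support ⊆ d.support :=
  Finsupp.support_mono (h ▸ le_add_right le_rfl)

lemma support_right_subset {d1 d2 d : Sym2 B →₀ ℕ} (h : d1 + d2 = d) :
    d2.support ⊆ d.support :=
  Finsupp.support_mono (h ▸ le_add_left le_rfl)

/-- Restriction: kill all monomials whose support is not within `E`. -/
noncomputable def restrict (E : Set (Sym2 B)) :
    MvPowerSeries (Sym2 B) ℂ →+* MvPowerSeries (Sym2 B) ℂ where
  toFun := restrictFun E
  map_one' := by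
    classical
    apply MvPowerSeries.ext; intro d
    rw [coeff_restrictFun]
    by_cases h : (↑d.support : Set (Sym2 B)) ⊆ E
    · simp [h]
    · have hd : d ≠ 0 := by rintro rfl; simp at h
      rw [if_neg h, MvPowerSeries.coeff_one, if_neg hd]
  map_mul' := by
    classical
    intro f g
    apply MvPowerSeries.ext; intro d
    rw [coeff_restrictFun, MvPowerSeries.coeff_mul, MvPowerSeries.coeff_mul]
    by_cases h : (↑d.support : Set (Sym2 B)) ⊆ E
    · rw [if_pos h]
      refine Finset.sum_congr rfl ?_
      rintro ⟨d1, d2⟩ hmem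
      rw [Finset.HasAntidiagonal.mem_antidiagonal] at hmem
      have h1 : (↑d1.support : Set (Sym2 B)) ⊆ E :=
        subset_trans (by exact_mod_cast support_left_subset hmem) h
      have h2 : (↑d2.support : Set (Sym2 B)) ⊆ E :=
        subset_trans (by exact_mod_cast support_right_subset hmem) h
      rw [coeff_restrictFun, coeff_restrictFun, if_pos h1, if_pos h2]
    · rw [if_neg h]
      refine (Finset.sum_eq_zero ?_).symm
      rintro ⟨d1, d2⟩ hmem
      rw [Finset.HasAntidiagonal.mem_antidiagonal] at hmem
      obtain ⟨e, he, heE⟩ := Set.not_subset.mp h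
      have he' : e ∈ d.support := by exact_mod_cast he
      have hor : e ∈ d1.support ∨ e ∈ d2.support := by
        rw [Finsupp.mem_support_iff] at he'
        by_contra hcon
        push_neg at hcon
        simp only [Finsupp.mem_support_iff, not_not] at hcon
        exact he' (by rw [← hmem]; simp [Finsupp.add_apply, hcon.1, hcon.2])
      rcases hor with h1 | h2
      · have : ¬ (↑d1.support : Set (Sym2 B)) ⊆ E := fun hs => heE (hs (by exact_mod_cast h1))
        show MvPowerSeries.coeff (R := ℂ) d1 (restrictFun E f) * _ = 0
        rw [coeff_restrictFun E f, if_neg this, zero_mul]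
      · have : ¬ (↑d2.support : Set (Sym2 B)) ⊆ E := fun hs => heE (hs (by exact_mod_cast h2))
        show _ * MvPowerSeries.coeff (R := ℂ) d2 (restrictFun E g) = 0
        rw [coeff_restrictFun E g, if_neg this, mul_zero]
  map_zero' := by
    apply MvPowerSeries.ext; intro d
    rw [coeff_restrictFun]; simp
  map_add' := by
    intro f g
    apply MvPowerSeries.ext; intro d
    rw [coeff_restrictFun, map_add, map_add, coeff_restrictFun, coeff_restrictFun]
    by_cases h : (↑d.support : Set (Sym2 B)) ⊆ E <;> simp [h]

lemma coeff_restrict (E : Set (Sym2 B)) (f : MvPowerSeries (Sym2 B) ℂ) (d : Sym2 B →₀ ℕ) :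
    MvPowerSeries.coeff (R := ℂ) d (restrict E f)
      = if (↑d.support : Set (Sym2 B)) ⊆ E then MvPowerSeries.coeff (R := ℂ) d f else 0 := by
  classical
  exact coeff_restrictFun E f d

lemma restrict_eq_self (E : Set (Sym2 B)) (f : MvPowerSeries (Sym2 B) ℂ)
    (h : ∀ d : Sym2 B →₀ ℕ, MvPowerSeries.coeff (R := ℂ) d f ≠ 0 → (↑d.support : Set (Sym2 B)) ⊆ E) :
    restrict E f = f := by
  apply MvPowerSeries.ext; intro d
  rw [coeff_restrict]
  by_cases hd : (↑d.support : Set (Sym2 B)) ⊆ E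
  · rw [if_pos hd]
  · rw [if_neg hd]
    by_contra hc
    exact hd (h d (fun hzero => hc hzero.symm))

lemma restrict_eq_C (E : Set (Sym2 B)) (f : MvPowerSeries (Sym2 B) ℂ)
    (h : ∀ d : Sym2 B →₀ ℕ, d ≠ 0 → (↑d.support : Set (Sym2 B)) ⊆ E →
      MvPowerSeries.coeff (R := ℂ) d f = 0) :
    restrict E f = MvPowerSeries.C (σ := Sym2 B) (R := ℂ) (MvPowerSeries.constantCoeff (σ := Sym2 B) (R := ℂ) f) := by
  classical
  apply MvPowerSeries.ext; intro d
  rw [coeff_restrict, MvPowerSeries.coeff_C]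
  by_cases hd : d = 0
  · subst hd; simp [MvPowerSeries.coeff_zero_eq_constantCoeff]
  · rw [if_neg hd]
    by_cases hE : (↑d.support : Set (Sym2 B)) ⊆ E
    · rw [if_pos hE]; exact h d hd hE
    · rw [if_neg hE]

end CCEAux
open Finset

namespace CCEAux2

variable {B : Type*} [DecidableEq B]

lemma walk_cross {G : SimpleGraph B} {C : Set B} {X Y : Finset B}
    (hXY : Disjoint X Y) (hcov : ∀ z ∈ C, z ∈ X ∨ z ∈ Y) :
    ∀ {u v : C} (_ : (G.induce C).Walk u v), ↑u ∈ X → ↑v ∈ Y →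
      ∃ i ∈ X, ∃ j ∈ Y, G.Adj i j := by
  intro u v w
  induction w with
  | nil =>
    intro hu hv
    exact absurd hu (Finset.disjoint_right.mp hXY hv)
  | @cons a b c h p ih =>
    intro hu hv
    rcases hcov ↑b b.2 with hb | hb
    · exact ih hb hv
    · exact ⟨↑a, hu, ↑b, hb, h⟩

lemma exists_partition {E0 : Set (Sym2 B)} {S : Finset B} (hS : S.Nonempty)
    (hnc : ¬ ((SimpleGraph.fromEdgeSet E0).induce (↑S : Set B)).Connected) :
    ∃ X Y : Finset B, X ∪ Y = S ∧ Disjoint X Y ∧ X.Nonempty ∧ Y.Nonempty ∧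
      ∀ i ∈ X, ∀ j ∈ Y, s(i, j) ∉ E0 := by
  classical
  set G := SimpleGraph.fromEdgeSet E0 with hG
  set H := G.induce (↑S : Set B) with hH
  have hne : Nonempty (↑(↑S : Set B)) := ⟨⟨hS.choose, hS.choose_spec⟩⟩
  rw [SimpleGraph.connected_iff] at hnc
  push_neg at hnc
  have hpre : ¬ H.Preconnected := fun hp => (hnc hp).elim hne.some
  rw [SimpleGraph.Preconnected] at hpre
  push_neg at hpre
  obtain ⟨u, v, huv⟩ := hpre
  set X : Finset B := S.filter (fun a => ∃ h : a ∈ S, H.Reachable u ⟨a, h⟩) with hX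
  refine ⟨X, S \ X, Finset.union_sdiff_of_subset (Finset.filter_subset _ _),
    Finset.disjoint_sdiff, ⟨↑u, ?_⟩, ⟨↑v, ?_⟩, ?_⟩
  · rw [hX, Finset.mem_filter]
    refine ⟨u.2, u.2, ?_⟩
    convert SimpleGraph.Reachable.refl u
  · rw [Finset.mem_sdiff, hX, Finset.mem_filter]
    refine ⟨v.2, ?_⟩
    rintro ⟨-, h2, hr⟩
    exact huv (by convert hr)
  · intro i hi j hj he
    rw [hX, Finset.mem_filter] at hi
    obtain ⟨hiS, hiS', hri⟩ := hi
    obtain ⟨hjS, hjX⟩ := Finset.mem_sdiff.mp hj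
    apply hjX
    rw [hX, Finset.mem_filter]
    refine ⟨hjS, hjS, ?_⟩
    refine hri.trans (SimpleGraph.Adj.reachable ?_)
    show H.Adj ⟨i, hiS'⟩ ⟨j, hjS⟩
    have hij : i ≠ j := by
      rintro rfl
      exact hjX (by rw [hX, Finset.mem_filter]; exact ⟨hiS, hiS', hri⟩)
    have hadj : G.Adj i j := (SimpleGraph.fromEdgeSet_adj _).mpr ⟨he, hij⟩
    simpa [hH, SimpleGraph.comap_adj] using hadj

lemma mixed_cross {E0 : Set (Sym2 B)} {C X Y : Finset B}
    (hXY : Disjoint X Y) (hsub : C ⊆ X ∪ Y)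
    (hconn : ((SimpleGraph.fromEdgeSet E0).induce (↑C : Set B)).Connected)
    {a b : B} (ha : a ∈ C ∩ X) (hb : b ∈ C ∩ Y) :
    ∃ i ∈ X, ∃ j ∈ Y, s(i, j) ∈ E0 := by
  have haC : a ∈ C := (Finset.mem_inter.mp ha).1
  have hbC : b ∈ C := (Finset.mem_inter.mp hb).1
  have hr := hconn.preconnected ⟨a, haC⟩ ⟨b, hbC⟩
  obtain ⟨w⟩ := hr
  obtain ⟨i, hi, j, hj, hadj⟩ := walk_cross hXY
    (fun z hz => by
      have : z ∈ X ∪ Y := hsub (by exact_mod_cast hz)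
      exact Finset.mem_union.mp this)
    w (Finset.mem_inter.mp ha).2 (Finset.mem_inter.mp hb).2
  exact ⟨i, hi, j, hj, ((SimpleGraph.fromEdgeSet_adj _).mp hadj).1⟩

end CCEAux2
open MvPowerSeries Finset

/-- Connectivity lemma for the cluster correlation expansion: if each `L S` is a formal
power series in the pair variables `b_{ij}` with constant term `1`, depending only on
variables inside `S`, and `L` is factorable under disconnected interactions (setting all
cross variables between disjoint `X` and `Y` to zero makes `L (X ∪ Y)` specialize to
`L X * L Y`), then every non-constant monomial appearing in `Lt S` (where
`L S = ∏_{C ⊆ S} Lt C`) has an edge set connecting all of `S`: the graph on vertex set `S`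
whose edges are the pairs occurring in the monomial is connected and spans `S`. -/
theorem cce_connected_monomials {B : Type*} [DecidableEq B]
    (L Lt : Finset B → MvPowerSeries (Sym2 B) ℂ)
    (hconst : ∀ S, MvPowerSeries.constantCoeff (σ := Sym2 B) (R := ℂ) (L S) = 1)
    (hvars : ∀ (S : Finset B) (d : Sym2 B →₀ ℕ),
      MvPowerSeries.coeff (R := ℂ) d (L S) ≠ 0 → ∀ e ∈ d.support, ∀ i ∈ e, i ∈ S)
    (hfact : ∀ X Y : Finset B, Disjoint X Y →
      ∀ d : Sym2 B →₀ ℕ,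
        (∀ e ∈ d.support, ¬ ∃ i ∈ X, ∃ j ∈ Y, e = s(i, j)) →
        MvPowerSeries.coeff (R := ℂ) d (L (X ∪ Y)) = MvPowerSeries.coeff (R := ℂ) d (L X * L Y))
    (hrec : ∀ S, L S = ∏ C ∈ S.powerset, Lt C) :
    ∀ (S : Finset B) (d : Sym2 B →₀ ℕ), d ≠ 0 →
      MvPowerSeries.coeff (R := ℂ) d (Lt S) ≠ 0 →
      ((SimpleGraph.fromEdgeSet (↑d.support : Set (Sym2 B))).induce (↑S : Set B)).Connected := by
  classical
  -- constant coefficients of all `Lt C` are nonzero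
  have hcunit : ∀ S : Finset B, ∀ C ∈ S.powerset,
      MvPowerSeries.constantCoeff (σ := Sym2 B) (R := ℂ) (Lt C) ≠ 0 := by
    intro S C hC hzero
    have h1 : ∏ C ∈ S.powerset, MvPowerSeries.constantCoeff (σ := Sym2 B) (R := ℂ) (Lt C) = 1 := by
      rw [← map_prod, ← hrec, hconst]
    rw [Finset.prod_eq_zero hC hzero] at h1
    exact zero_ne_one h1
  have hcunit' : ∀ C : Finset B, MvPowerSeries.constantCoeff (σ := Sym2 B) (R := ℂ) (Lt C) ≠ 0 :=
    fun C => hcunit C C (Finset.mem_powerset_self C)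
  -- `L ∅ = 1`, hence `Lt ∅ = 1`
  have hLempty : L ∅ = 1 := by
    apply MvPowerSeries.ext; intro d
    by_cases hd : d = 0
    · subst hd
      simp [MvPowerSeries.coeff_zero_eq_constantCoeff, hconst]
    · rw [MvPowerSeries.coeff_one, if_neg hd]
      by_contra hc
      obtain ⟨e, he⟩ := Finsupp.support_nonempty_iff.mpr hd
      exact absurd (hvars ∅ d hc e he e.out.1 (Sym2.out_fst_mem e)) (Finset.notMem_empty _)
  have hLtempty : Lt ∅ = 1 := by
    have := hrec ∅
    rw [Finset.powerset_empty, Finset.prod_singleton] at this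
    rw [← this, hLempty]
  -- main strong induction
  suffices key : ∀ S : Finset B,
      (∀ d : Sym2 B →₀ ℕ, MvPowerSeries.coeff (R := ℂ) d (Lt S) ≠ 0 →
        (↑d.support : Set (Sym2 B)) ⊆ {e : Sym2 B | ∀ i ∈ e, i ∈ S}) ∧
      (∀ d : Sym2 B →₀ ℕ, d ≠ 0 → MvPowerSeries.coeff (R := ℂ) d (Lt S) ≠ 0 →
        ((SimpleGraph.fromEdgeSet (↑d.support : Set (Sym2 B))).induce (↑S : Set B)).Connected) by
    intro S d hd0 hdc
    exact (key S).2 d hd0 hdc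
  intro S
  induction S using Finset.strongInduction with
  | _ S ih =>
  -- the product decomposition
  have hps : L S = Lt S * ∏ C ∈ S.powerset.erase S, Lt C := by
    rw [hrec, ← Finset.mul_prod_erase S.powerset Lt (Finset.mem_powerset_self S)]
  have hPunit : ∀ T : Finset (Finset B), T ⊆ S.powerset → IsUnit (∏ C ∈ T, Lt C) := by
    intro T hT
    rw [MvPowerSeries.isUnit_iff_constantCoeff, map_prod]
    rw [isUnit_iff_ne_zero, Finset.prod_ne_zero_iff]
    exact fun C hC => hcunit S C (hT hC)
  -- Part 1: variables of `Lt S` lie in `S`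
  have varsS : ∀ d : Sym2 B →₀ ℕ, MvPowerSeries.coeff (R := ℂ) d (Lt S) ≠ 0 →
      (↑d.support : Set (Sym2 B)) ⊆ {e : Sym2 B | ∀ i ∈ e, i ∈ S} := by
    set ES : Set (Sym2 B) := {e : Sym2 B | ∀ i ∈ e, i ∈ S} with hES
    have hLS : CCEAux.restrict ES (L S) = L S := by
      apply CCEAux.restrict_eq_self
      intro d hd e he
      exact fun i hi => hvars S d hd e (by exact_mod_cast he) i hi
    have hLtC : ∀ C ∈ S.powerset.erase S, CCEAux.restrict ES (Lt C) = Lt C := by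
      intro C hC
      obtain ⟨hne, hsub⟩ := Finset.mem_erase.mp hC
      have hss : C ⊂ S := Finset.ssubset_iff_subset_ne.mpr ⟨Finset.mem_powerset.mp hsub, hne⟩
      apply CCEAux.restrict_eq_self
      intro d hd e he i hi
      exact Finset.mem_powerset.mp hsub ((ih C hss).1 d hd he i hi)
    have heq : Lt S * (∏ C ∈ S.powerset.erase S, Lt C)
        = CCEAux.restrict ES (Lt S) * (∏ C ∈ S.powerset.erase S, Lt C) := by
      conv_lhs => rw [← hps]
      rw [← hLS, hps, map_mul, map_prod]
      congr 1
      exact Finset.prod_congr rfl hLtC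
    have hcancel : Lt S = CCEAux.restrict ES (Lt S) := by
      have hu := hPunit (S.powerset.erase S) (Finset.erase_subset _ _)
      exact hu.mul_left_cancel (by rw [mul_comm, heq, mul_comm])
    intro d hd
    by_contra hns
    rw [hcancel, CCEAux.coeff_restrict, if_neg hns] at hd
    exact hd rfl
  refine ⟨varsS, ?_⟩
  -- Part 2: connectivity
  intro d hd0 hdc
  by_contra hnc
  rcases S.eq_empty_or_nonempty with rfl | hS
  · -- S = ∅ : impossible since Lt ∅ = 1
    rw [hLtempty, MvPowerSeries.coeff_one, if_neg hd0] at hdc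
    exact hdc rfl
  obtain ⟨X, Y, hXYS, hXY, hXne, hYne, hcross⟩ := CCEAux2.exists_partition hS hnc
  set E : Set (Sym2 B) := {e : Sym2 B | ¬ ∃ i ∈ X, ∃ j ∈ Y, e = s(i, j)} with hE
  -- restriction of `L S` is `L X * L Y`
  have h1 : CCEAux.restrict E (L S) = L X * L Y := by
    apply MvPowerSeries.ext; intro d'
    rw [CCEAux.coeff_restrict]
    by_cases hcl : (↑d'.support : Set (Sym2 B)) ⊆ E
    · rw [if_pos hcl, ← hXYS]
      exact hfact X Y hXY d' (fun e he => hcl (by exact_mod_cast he))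
    · rw [if_neg hcl]
      obtain ⟨e, he, heE⟩ := Set.not_subset.mp hcl
      rw [hE, Set.mem_setOf_eq, not_not] at heE
      obtain ⟨i, hiX, j, hjY, rfl⟩ := heE
      have he' : s(i, j) ∈ d'.support := by exact_mod_cast he
      rw [MvPowerSeries.coeff_mul]
      refine (Finset.sum_eq_zero ?_).symm
      rintro ⟨d1, d2⟩ hmem
      rw [Finset.HasAntidiagonal.mem_antidiagonal] at hmem
      have hor : s(i, j) ∈ d1.support ∨ s(i, j) ∈ d2.support := by
        rw [Finsupp.mem_support_iff] at he'
        by_contra hcon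
        push_neg at hcon
        simp only [Finsupp.mem_support_iff, not_not] at hcon
        exact he' (by rw [← hmem]; simp [Finsupp.add_apply, hcon.1, hcon.2])
      rcases hor with h1 | h2
      · have : MvPowerSeries.coeff (R := ℂ) d1 (L X) = 0 := by
          by_contra hc
          have := hvars X d1 hc _ h1 j (Sym2.mem_mk_right i j)
          exact absurd hjY (Finset.disjoint_left.mp hXY this)
        rw [this, zero_mul]
      · have : MvPowerSeries.coeff (R := ℂ) d2 (L Y) = 0 := by
          by_contra hc
          have := hvars Y d2 hc _ h2 i (Sym2.mem_mk_left i j)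
          exact absurd hiX (Finset.disjoint_right.mp hXY this)
        rw [this, mul_zero]
  -- split the powerset into mixed and non-mixed parts
  set M : Finset (Finset B) :=
    S.powerset.filter (fun C => (C ∩ X).Nonempty ∧ (C ∩ Y).Nonempty) with hM
  set N : Finset (Finset B) :=
    S.powerset.filter (fun C => ¬ ((C ∩ X).Nonempty ∧ (C ∩ Y).Nonempty)) with hN
  have hNM : ∏ C ∈ S.powerset, CCEAux.restrict E (Lt C)
      = (∏ C ∈ N, CCEAux.restrict E (Lt C)) * ∏ C ∈ M, CCEAux.restrict E (Lt C) := by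
    rw [hN, hM, mul_comm, Finset.prod_filter_mul_prod_filter_not]
  -- non-mixed subsets are unaffected by the restriction
  have hSM : S ∈ M := by
    rw [hM, Finset.mem_filter]
    refine ⟨Finset.mem_powerset_self S, ?_, ?_⟩
    · obtain ⟨x, hx⟩ := hXne
      exact ⟨x, Finset.mem_inter.mpr ⟨by rw [← hXYS]; exact Finset.mem_union_left _ hx, hx⟩⟩
    · obtain ⟨y, hy⟩ := hYne
      exact ⟨y, Finset.mem_inter.mpr ⟨by rw [← hXYS]; exact Finset.mem_union_right _ hy, hy⟩⟩
  have hNsub : ∀ C ∈ N, C ⊆ X ∨ C ⊆ Y := by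
    intro C hC
    rw [hN, Finset.mem_filter] at hC
    obtain ⟨hCS, hmix⟩ := hC
    rw [not_and_or] at hmix
    rcases hmix with h | h
    · right
      rw [Finset.not_nonempty_iff_eq_empty] at h
      intro z hz
      have : z ∈ X ∪ Y := hXYS ▸ Finset.mem_powerset.mp hCS hz
      rcases Finset.mem_union.mp this with hzX | hzY
      · exact absurd (Finset.mem_inter.mpr ⟨hz, hzX⟩) (by rw [h]; exact Finset.notMem_empty z)
      · exact hzY
    · left
      rw [Finset.not_nonempty_iff_eq_empty] at h
      intro z hz
      have : z ∈ X ∪ Y := hXYS ▸ Finset.mem_powerset.mp hCS hz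
      rcases Finset.mem_union.mp this with hzX | hzY
      · exact hzX
      · exact absurd (Finset.mem_inter.mpr ⟨hz, hzY⟩) (by rw [h]; exact Finset.notMem_empty z)
  have hNfix : ∀ C ∈ N, CCEAux.restrict E (Lt C) = Lt C := by
    intro C hC
    have hC2 := hC
    rw [hN, Finset.mem_filter] at hC2
    have hCS : C ⊆ S := Finset.mem_powerset.mp hC2.1
    have hCneS : C ≠ S := by
      rintro rfl
      have hSM2 := hSM
      rw [hM, Finset.mem_filter] at hSM2
      exact hC2.2 hSM2.2
    have hss : C ⊂ S := Finset.ssubset_iff_subset_ne.mpr ⟨hCS, hCneS⟩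
    apply CCEAux.restrict_eq_self
    intro d' hd' e he
    have hvC : ∀ i ∈ e, i ∈ C := (ih C hss).1 d' hd' he
    rw [hE, Set.mem_setOf_eq]
    rintro ⟨i, hiX, j, hjY, rfl⟩
    rcases hNsub C hC with hCX | hCY
    · exact absurd hjY (Finset.disjoint_left.mp hXY (hCX (hvC j (Sym2.mem_mk_right i j))))
    · exact absurd hiX (Finset.disjoint_right.mp hXY (hCY (hvC i (Sym2.mem_mk_left i j))))
  -- `N` equals the union of the two powersets
  have hNeq : N = X.powerset ∪ Y.powerset := by
    apply Finset.ext; intro C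
    constructor
    · intro hC
      rcases hNsub C hC with h | h
      · exact Finset.mem_union_left _ (Finset.mem_powerset.mpr h)
      · exact Finset.mem_union_right _ (Finset.mem_powerset.mpr h)
    · intro hC
      rw [hN, Finset.mem_filter]
      rcases Finset.mem_union.mp hC with h | h <;> rw [Finset.mem_powerset] at h
      · refine ⟨Finset.mem_powerset.mpr (h.trans ?_), ?_⟩
        · rw [← hXYS]; exact Finset.subset_union_left
        · rintro ⟨⟨a, ha⟩, ⟨b, hb⟩⟩
          obtain ⟨hbC, hbY⟩ := Finset.mem_inter.mp hb
          exact absurd hbY (Finset.disjoint_left.mp hXY (h hbC))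
      · refine ⟨Finset.mem_powerset.mpr (h.trans ?_), ?_⟩
        · rw [← hXYS]; exact Finset.subset_union_right
        · rintro ⟨⟨a, ha⟩, ⟨b, hb⟩⟩
          obtain ⟨haC, haX⟩ := Finset.mem_inter.mp ha
          exact absurd haX (Finset.disjoint_right.mp hXY (h haC))
  have hinter : X.powerset ∩ Y.powerset = {∅} := by
    apply Finset.ext; intro C
    rw [Finset.mem_inter, Finset.mem_powerset, Finset.mem_powerset, Finset.mem_singleton]
    constructor
    · rintro ⟨h1, h2⟩
      rw [← Finset.subset_empty]
      intro z hz
      exact absurd (h2 hz) (Finset.disjoint_left.mp hXY (h1 hz))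
    · rintro rfl
      exact ⟨Finset.empty_subset _, Finset.empty_subset _⟩
  have h6 : (∏ C ∈ N, Lt C) = L X * L Y := by
    have := Finset.prod_union_inter (s₁ := X.powerset) (s₂ := Y.powerset) (f := Lt)
    rw [hinter, Finset.prod_singleton, hLtempty, mul_one] at this
    rw [hNeq, this, hrec X, hrec Y]
  -- conclude that the mixed product is 1
  have h7 : ∏ C ∈ M, CCEAux.restrict E (Lt C) = 1 := by
    have hNU : IsUnit (∏ C ∈ N, Lt C) :=
      hPunit N (by rw [hN]; exact Finset.filter_subset _ _)
    apply hNU.mul_left_cancel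
    rw [mul_one]
    calc (∏ C ∈ N, Lt C) * ∏ C ∈ M, CCEAux.restrict E (Lt C)
        = (∏ C ∈ N, CCEAux.restrict E (Lt C)) * ∏ C ∈ M, CCEAux.restrict E (Lt C) := by
          rw [Finset.prod_congr rfl hNfix]
      _ = ∏ C ∈ S.powerset, CCEAux.restrict E (Lt C) := hNM.symm
      _ = CCEAux.restrict E (L S) := by rw [hrec, map_prod]
      _ = L X * L Y := h1
      _ = ∏ C ∈ N, Lt C := h6.symm
  -- every mixed proper subset contributes only a constant
  have h8 : ∀ C ∈ M.erase S, CCEAux.restrict E (Lt C)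
      = MvPowerSeries.C (σ := Sym2 B) (R := ℂ) (MvPowerSeries.constantCoeff (σ := Sym2 B) (R := ℂ) (Lt C)) := by
    intro C hC
    obtain ⟨hCneS, hCM⟩ := Finset.mem_erase.mp hC
    rw [hM, Finset.mem_filter] at hCM
    obtain ⟨hCS, ⟨a, ha⟩, ⟨b, hb⟩⟩ := hCM
    have hss : C ⊂ S := Finset.ssubset_iff_subset_ne.mpr ⟨Finset.mem_powerset.mp hCS, hCneS⟩
    apply CCEAux.restrict_eq_C
    intro d' hd0' hcl
    by_contra hc
    have hconn := (ih C hss).2 d' hd0' hc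
    obtain ⟨i, hiX, j, hjY, hij⟩ := CCEAux2.mixed_cross hXY
      (by rw [hXYS]; exact Finset.mem_powerset.mp hCS) hconn ha hb
    exact (hcl (by exact_mod_cast hij)) ⟨i, hiX, j, hjY, rfl⟩
  -- finish
  have h9 : CCEAux.restrict E (Lt S) *
      MvPowerSeries.C (σ := Sym2 B) (R := ℂ)
        (∏ C ∈ M.erase S, MvPowerSeries.constantCoeff (σ := Sym2 B) (R := ℂ) (Lt C)) = 1 := by
    rw [map_prod, ← Finset.prod_congr rfl h8,
      Finset.mul_prod_erase M (fun C => CCEAux.restrict E (Lt C)) hSM, h7]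
  have hdcl : (↑d.support : Set (Sym2 B)) ⊆ E := by
    intro e he
    rw [hE, Set.mem_setOf_eq]
    rintro ⟨i, hiX, j, hjY, rfl⟩
    exact hcross i hiX j hjY (by exact_mod_cast he)
  have hfin := congrArg (MvPowerSeries.coeff (R := ℂ) d) h9
  rw [MvPowerSeries.coeff_mul_C, MvPowerSeries.coeff_one, if_neg hd0,
    CCEAux.coeff_restrict, if_pos hdcl] at hfin
  have hcne : (∏ C ∈ M.erase S, MvPowerSeries.constantCoeff (σ := Sym2 B) (R := ℂ) (Lt C)) ≠ 0 := by
    rw [Finset.prod_ne_zero_iff]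
    exact fun C _ => hcunit' C
  exact hdc (by
    rcases mul_eq_zero.mp hfin with h | h
    · exact h
    · exact absurd h hcne)
end

section
/- Under the hypotheses of the connectivity lemma (L factorable under disconnected interactions, power series with constant term 1), the cluster correlation term tilde-L(S) for |S| = k equals a constant plus terms of total degree at least k-1 in the variables b_{ij}. -/
set_option linter.unusedSectionVars false

open MvPowerSeries Finset

namespace CCEAux

variable {B : Type*} [DecidableEq B]

/-- total degree of an exponent. -/
def degT (d : Sym2 B →₀ ℕ) : ℕ := d.sum fun _ n => n

lemma degT_add (a b : Sym2 B →₀ ℕ) : degT (a + b) = degT a + degT b :=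
  Finsupp.sum_add_index' (fun _ => rfl) (fun _ _ _ => rfl)

lemma one_le_degT {d : Sym2 B →₀ ℕ} (hd : d ≠ 0) : 1 ≤ degT d := by
  obtain ⟨e, he⟩ := Finsupp.support_nonempty_iff.mpr hd
  calc 1 ≤ d e := Nat.one_le_iff_ne_zero.mpr (Finsupp.mem_support_iff.mp he)
    _ ≤ degT d := Finset.single_le_sum (fun _ _ => Nat.zero_le _) he

lemma support_card_le_degT (d : Sym2 B →₀ ℕ) : d.support.card ≤ degT d := by
  rw [Finset.card_eq_sum_ones]
  exact Finset.sum_le_sum fun e he =>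
    Nat.one_le_iff_ne_zero.mpr (Finsupp.mem_support_iff.mp he)

lemma support_subset_add_left (a b : Sym2 B →₀ ℕ) : a.support ⊆ (a + b).support := by
  intro e he
  simp only [Finsupp.mem_support_iff, Finsupp.add_apply] at he ⊢
  omega

/-- crossing: `d` has an edge between `X` and `Y`. -/
def Cross (X Y : Finset B) (d : Sym2 B →₀ ℕ) : Prop :=
  ∃ e ∈ d.support, ∃ i ∈ X, ∃ j ∈ Y, e = s(i, j)

lemma not_cross_mono {X Y : Finset B} {a d : Sym2 B →₀ ℕ} (h : a.support ⊆ d.support)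
    (hd : ¬ Cross X Y d) : ¬ Cross X Y a := by
  rintro ⟨e, he, i, hi, j, hj, rfl⟩
  exact hd ⟨_, h he, i, hi, j, hj, rfl⟩

/-- confinement predicate -/
def Conf (V : Finset B) (f : MvPowerSeries (Sym2 B) ℂ) : Prop :=
  ∀ d : Sym2 B →₀ ℕ, coeff d f ≠ 0 → ∀ e ∈ d.support, ∀ i ∈ e, i ∈ V

lemma Conf.mul {V : Finset B} {f g : MvPowerSeries (Sym2 B) ℂ}
    (hf : Conf V f) (hg : Conf V g) : Conf V (f * g) := by
  intro d hd e he i hie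
  rw [coeff_mul] at hd
  obtain ⟨p, hp, hne⟩ := Finset.exists_ne_zero_of_sum_ne_zero hd
  have hsum : p.1 + p.2 = d := Finset.HasAntidiagonal.mem_antidiagonal.mp hp
  have h1 : coeff p.1 f ≠ 0 := fun h => hne (by rw [h, zero_mul])
  have h2 : coeff p.2 g ≠ 0 := fun h => hne (by rw [h, mul_zero])
  have hde : d e ≠ 0 := Finsupp.mem_support_iff.mp he
  have : p.1 e ≠ 0 ∨ p.2 e ≠ 0 := by
    have : p.1 e + p.2 e = d e := by rw [← hsum]; rfl
    omega
  rcases this with h | h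
  · exact hf _ h1 e (Finsupp.mem_support_iff.mpr h) i hie
  · exact hg _ h2 e (Finsupp.mem_support_iff.mpr h) i hie

lemma Conf.one {V : Finset B} : Conf V (1 : MvPowerSeries (Sym2 B) ℂ) := by
  intro d hd e he i hie
  rw [coeff_one] at hd
  split_ifs at hd with h
  · subst h; simp at he
  · exact absurd rfl hd

lemma Conf.mono {V W : Finset B} {f : MvPowerSeries (Sym2 B) ℂ} (h : V ⊆ W) (hf : Conf V f) :
    Conf W f := fun d hd e he i hie => h (hf d hd e he i hie)

/-- crossless-vanishing predicate -/
def Van (X Y : Finset B) (f : MvPowerSeries (Sym2 B) ℂ) : Prop :=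
  ∀ b : Sym2 B →₀ ℕ, b ≠ 0 → ¬ Cross X Y b → coeff b f = 0

lemma Van.mul {X Y : Finset B} {f g : MvPowerSeries (Sym2 B) ℂ}
    (hf : Van X Y f) (hg : Van X Y g) : Van X Y (f * g) := by
  intro b hb0 hbc
  rw [coeff_mul]
  apply Finset.sum_eq_zero
  intro p hp
  have hsum : p.1 + p.2 = b := Finset.HasAntidiagonal.mem_antidiagonal.mp hp
  by_cases h1 : p.1 = 0
  · have h2 : p.2 = b := by rw [← hsum, h1, zero_add]
    rw [hg p.2 (h2 ▸ hb0) (h2 ▸ hbc), mul_zero]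
  · rw [hf p.1 h1 (not_cross_mono (hsum ▸ support_subset_add_left p.1 p.2) hbc), zero_mul]

lemma Van.one {X Y : Finset B} : Van X Y (1 : MvPowerSeries (Sym2 B) ℂ) := by
  intro b hb0 _
  rw [coeff_one, if_neg hb0]

/-- two-term coefficient extraction for products. -/
lemma coeff_mul_two (f g : MvPowerSeries (Sym2 B) ℂ) (d : Sym2 B →₀ ℕ) (hd : d ≠ 0)
    (h : ∀ a b : Sym2 B →₀ ℕ, a + b = d → a ≠ 0 → b ≠ 0 → coeff a f * coeff b g = 0) :
    coeff d (f * g) = coeff d f * coeff 0 g + coeff 0 f * coeff d g := by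
  rw [coeff_mul]
  have hsub : ({((d : Sym2 B →₀ ℕ), (0 : Sym2 B →₀ ℕ)), (0, d)} : Finset _) ⊆
      Finset.HasAntidiagonal.antidiagonal d := by
    intro p hp
    rcases Finset.mem_insert.mp hp with h | h
    · subst h; exact Finset.HasAntidiagonal.mem_antidiagonal.mpr (add_zero d)
    · rw [Finset.mem_singleton.mp h]; exact Finset.HasAntidiagonal.mem_antidiagonal.mpr (zero_add d)
  rw [← Finset.sum_subset hsub]
  · rw [Finset.sum_pair (by simp [hd, Prod.ext_iff])]
  · intro p hp hnp
    have hsum : p.1 + p.2 = d := Finset.HasAntidiagonal.mem_antidiagonal.mp hp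
    have h1 : p.1 ≠ 0 := by
      rintro h0
      exact hnp (by simp [Prod.ext_iff, h0, ← hsum])
    have h2 : p.2 ≠ 0 := by
      rintro h0
      exact hnp (by simp [Prod.ext_iff, h0, ← hsum])
    exact h p.1 p.2 hsum h1 h2


section Main

variable (L Lt : Finset B → MvPowerSeries (Sym2 B) ℂ)
variable (hconst : ∀ S, MvPowerSeries.constantCoeff (L S) = 1)
variable (hvars : ∀ (S : Finset B) (d : Sym2 B →₀ ℕ),
      MvPowerSeries.coeff d (L S) ≠ 0 → ∀ e ∈ d.support, ∀ i ∈ e, i ∈ S)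
variable (hfact : ∀ X Y : Finset B, Disjoint X Y →
      ∀ d : Sym2 B →₀ ℕ,
        (∀ e ∈ d.support, ¬ ∃ i ∈ X, ∃ j ∈ Y, e = s(i, j)) →
        MvPowerSeries.coeff d (L (X ∪ Y)) = MvPowerSeries.coeff d (L X * L Y))
variable (hrec : ∀ S, L S = ∏ C ∈ S.powerset, Lt C)

include hconst hrec in
lemma const_Lt : ∀ (k : ℕ) (S : Finset B), S.card < k →
    MvPowerSeries.constantCoeff (Lt S) = 1 := by
  intro k
  induction k with
  | zero => intro S hS; omega
  | succ k ih =>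
    intro S hS
    have h1 := hconst S
    rw [hrec S, map_prod, ← Finset.mul_prod_erase _ _ (Finset.mem_powerset_self S)] at h1
    have h2 : ∀ C ∈ S.powerset.erase S,
        MvPowerSeries.constantCoeff (Lt C) = 1 := by
      intro C hC
      have hCS : C ⊂ S := Finset.ssubset_iff_subset_ne.mpr
        ⟨Finset.mem_powerset.mp (Finset.mem_of_mem_erase hC), Finset.ne_of_mem_erase hC⟩
      exact ih C (lt_of_lt_of_le (Finset.card_lt_card hCS) (Nat.lt_succ_iff.mp hS))
    rw [Finset.prod_congr rfl h2, Finset.prod_const_one, mul_one] at h1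
    exact h1

include hconst hrec in
lemma const_prod (T : Finset (Finset B)) :
    coeff (0 : Sym2 B →₀ ℕ) (∏ C ∈ T, Lt C) = 1 := by
  rw [coeff_zero_eq_constantCoeff_apply, map_prod]
  exact Finset.prod_eq_one fun C _ =>
    const_Lt L Lt hconst hrec (C.card + 1) C (Nat.lt_succ_self _)

include hconst hvars hrec in
lemma Lt_empty : Lt (∅ : Finset B) = 1 := by
  have hL : L ∅ = Lt ∅ := by rw [hrec]; simp
  rw [← hL]
  apply MvPowerSeries.ext
  intro n
  rw [coeff_one]
  split_ifs with h
  · subst h; rw [coeff_zero_eq_constantCoeff_apply]; exact hconst ∅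
  · by_contra hne
    obtain ⟨e, he⟩ := Finsupp.support_nonempty_iff.mpr h
    obtain ⟨i, j, rfl⟩ : ∃ a b, e = s(a, b) := by
      induction e using Sym2.ind with | _ x y => exact ⟨x, y, rfl⟩
    exact absurd (hvars ∅ n hne _ he i (Sym2.mem_mk_left i j)) (Finset.notMem_empty i)

include hconst hvars hrec in
lemma conf_Lt : ∀ (k : ℕ) (S : Finset B), S.card < k → ∀ (n : ℕ) (d : Sym2 B →₀ ℕ),
    degT d ≤ n → ¬ (∀ e ∈ d.support, ∀ i ∈ e, i ∈ S) → coeff d (Lt S) = 0 := by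
  intro k
  induction k with
  | zero => intro S hS; omega
  | succ k ihk =>
    intro S hS n
    induction n with
    | zero =>
      intro d hdeg hbad
      exfalso
      apply hbad
      have : d = 0 := by
        by_contra h0
        have := one_le_degT h0
        omega
      subst this; simp
    | succ n ihn =>
      intro d hdeg hbad
      push_neg at hbad
      obtain ⟨e₀, he₀, i₀, hi₀e, hi₀S⟩ := hbad
      have hd0 : d ≠ 0 := by
        intro h; subst h; simp at he₀
      set P := ∏ C ∈ S.powerset.erase S, Lt C with hP
      have hLS : L S = Lt S * P := by
        rw [hrec]
        exact (Finset.mul_prod_erase _ _ (Finset.mem_powerset_self S)).symm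
      have hLcoeff : coeff d (L S) = 0 := by
        by_contra hne
        exact hi₀S (hvars S d hne e₀ he₀ i₀ hi₀e)
      have hConfP : Conf S P := by
        apply Finset.prod_induction _ _ (fun a b => Conf.mul) Conf.one
        intro C hC
        have hCS : C ⊂ S := Finset.ssubset_iff_subset_ne.mpr
          ⟨Finset.mem_powerset.mp (Finset.mem_of_mem_erase hC), Finset.ne_of_mem_erase hC⟩
        have hConfC : Conf C (Lt C) := by
          intro b hb e he i hie
          by_contra hiC
          exact hb (ihk C (lt_of_lt_of_le (Finset.card_lt_card hCS) (Nat.lt_succ_iff.mp hS))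
            (degT b) b le_rfl (by push_neg; exact ⟨e, he, i, hie, hiC⟩))
        exact hConfC.mono hCS.subset
      have hsum : coeff d (Lt S * P) = coeff d (Lt S) * coeff 0 P := by
        rw [coeff_mul]
        apply Finset.sum_eq_single_of_mem ((d, 0) : _ × _)
          (Finset.HasAntidiagonal.mem_antidiagonal.mpr (add_zero d))
        intro p hp hne
        have hps : p.1 + p.2 = d := Finset.HasAntidiagonal.mem_antidiagonal.mp hp
        have h2 : p.2 ≠ 0 := by
          intro h0
          exact hne (by simp [Prod.ext_iff, h0, ← hps])
        have hcase : p.1 e₀ ≠ 0 ∨ p.2 e₀ ≠ 0 := by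
          have hde : d e₀ ≠ 0 := Finsupp.mem_support_iff.mp he₀
          have : p.1 e₀ + p.2 e₀ = d e₀ := by rw [← hps]; rfl
          omega
        rcases hcase with h | h
        · have hdegp : degT p.1 ≤ n := by
            have h3 := degT_add p.1 p.2
            rw [hps] at h3
            have := one_le_degT h2
            omega
          have hbad1 : ¬ ∀ e ∈ p.1.support, ∀ i ∈ e, i ∈ S := by
            push_neg
            exact ⟨e₀, Finsupp.mem_support_iff.mpr h, i₀, hi₀e, hi₀S⟩
          rw [ihn p.1 hdegp hbad1, zero_mul]
        · have hz : coeff p.2 P = 0 := by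
            by_contra hne2
            exact hi₀S (hConfP p.2 hne2 e₀ (Finsupp.mem_support_iff.mpr h) i₀ hi₀e)
          rw [hz, mul_zero]
      have hP0 : coeff (0 : Sym2 B →₀ ℕ) P = 1 := const_prod L Lt hconst hrec _
      have := hLcoeff
      rw [hLS, hsum, hP0, mul_one] at this
      exact this

include hconst hvars hfact hrec in
lemma van_Lt : ∀ (k : ℕ) (S : Finset B), S.card < k →
    ∀ X Y : Finset B, Disjoint X Y → X ∪ Y = S → X.Nonempty → Y.Nonempty →
    ∀ (n : ℕ) (d : Sym2 B →₀ ℕ), degT d ≤ n → d ≠ 0 → ¬ Cross X Y d →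
    coeff d (Lt S) = 0 := by
  intro k
  induction k with
  | zero => intro S hS; omega
  | succ k ihk =>
    intro S hS X Y hdisj hunion hX hY n
    induction n with
    | zero =>
      intro d hdeg hd0 _
      have := one_le_degT hd0
      omega
    | succ n ihn =>
      intro d hdeg hd0 hcross
      have hXS : X ⊆ S := hunion ▸ Finset.subset_union_left
      have hYS : Y ⊆ S := hunion ▸ Finset.subset_union_right
      set P := ∏ C ∈ S.powerset.erase S, Lt C with hPdef
      set A2 := ∏ C ∈ X.powerset, Lt C with hA2def
      set B2 := ∏ C ∈ Y.powerset.erase ∅, Lt C with hB2def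
      set U : Finset (Finset B) := X.powerset ∪ Y.powerset.erase ∅ with hUdef
      set M := ∏ C ∈ S.powerset.erase S \ U, Lt C with hMdef
      -- basic subset facts
      have hsubU : U ⊆ S.powerset.erase S := by
        intro C hC
        rcases Finset.mem_union.mp hC with h | h
        · have hCX : C ⊆ X := Finset.mem_powerset.mp h
          refine Finset.mem_erase.mpr ⟨?_, Finset.mem_powerset.mpr (hCX.trans hXS)⟩
          rintro rfl
          obtain ⟨y, hy⟩ := hY
          exact (Finset.disjoint_left.mp hdisj) (hCX (hYS hy)) hy
        · have hC' := Finset.mem_of_mem_erase h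
          have hCY : C ⊆ Y := Finset.mem_powerset.mp hC'
          refine Finset.mem_erase.mpr ⟨?_, Finset.mem_powerset.mpr (hCY.trans hYS)⟩
          rintro rfl
          obtain ⟨x, hx⟩ := hX
          exact (Finset.disjoint_left.mp hdisj) hx (hCY (hXS hx))
      have hd12 : Disjoint X.powerset (Y.powerset.erase ∅) := by
        rw [Finset.disjoint_left]
        intro C hC1 hC2
        have hCX : C ⊆ X := Finset.mem_powerset.mp hC1
        have hCne : C ≠ ∅ := Finset.ne_of_mem_erase hC2
        have hCY : C ⊆ Y := Finset.mem_powerset.mp (Finset.mem_of_mem_erase hC2)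
        obtain ⟨c, hc⟩ := Finset.nonempty_iff_ne_empty.mpr hCne
        exact (Finset.disjoint_left.mp hdisj) (hCX hc) (hCY hc)
      -- factorization of P
      have hPfact : P = M * (A2 * B2) := by
        rw [hPdef, hMdef, ← Finset.prod_sdiff hsubU, hUdef, Finset.prod_union hd12]
      -- L X * L Y = A2 * B2
      have hLXY : L X * L Y = A2 * B2 := by
        rw [hrec X, hrec Y,
          ← Finset.mul_prod_erase _ _ (Finset.empty_mem_powerset Y),
          Lt_empty L Lt hconst hvars hrec, one_mul]
      -- M kills crossless monomials
      have hVanM : Van X Y M := by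
        apply Finset.prod_induction _ _ (fun a b => Van.mul) Van.one
        intro C hC
        have hCmem := Finset.mem_sdiff.mp hC
        have hCS : C ⊂ S := Finset.ssubset_iff_subset_ne.mpr
          ⟨Finset.mem_powerset.mp (Finset.mem_of_mem_erase hCmem.1),
           Finset.ne_of_mem_erase hCmem.1⟩
        have hnX : ¬ C ⊆ X := by
          intro h
          exact hCmem.2 (Finset.mem_union_left _ (Finset.mem_powerset.mpr h))
        have hnY : ¬ (C ⊆ Y ∧ C ≠ ∅) := by
          rintro ⟨h1, h2⟩
          exact hCmem.2 (Finset.mem_union_right _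
            (Finset.mem_erase.mpr ⟨h2, Finset.mem_powerset.mpr h1⟩))
        have hCne : C ≠ ∅ := by
          rintro rfl
          exact hnX (Finset.empty_subset X)
        have hCY : ¬ C ⊆ Y := fun h => hnY ⟨h, hCne⟩
        obtain ⟨a, haC, haX⟩ := Finset.not_subset.mp hnX
        obtain ⟨b, hbC, hbY⟩ := Finset.not_subset.mp hCY
        have haY : a ∈ Y := by
          have := hCS.subset haC
          rw [← hunion] at this
          rcases Finset.mem_union.mp this with h | h
          · exact absurd h haX
          · exact h
        have hbX : b ∈ X := by
          have := hCS.subset hbC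
          rw [← hunion] at this
          rcases Finset.mem_union.mp this with h | h
          · exact h
          · exact absurd h hbY
        intro e he0 hec
        apply ihk C (lt_of_lt_of_le (Finset.card_lt_card hCS) (Nat.lt_succ_iff.mp hS))
          (C ∩ X) (C ∩ Y)
          (hdisj.mono Finset.inter_subset_right Finset.inter_subset_right)
          (by rw [← Finset.inter_union_distrib_left, hunion,
                Finset.inter_eq_left.mpr hCS.subset])
          ⟨b, Finset.mem_inter.mpr ⟨hbC, hbX⟩⟩
          ⟨a, Finset.mem_inter.mpr ⟨haC, haY⟩⟩
          (degT e) e le_rfl he0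
        rintro ⟨e', he', i, hi, j, hj, heq⟩
        exact hec ⟨e', he', i, (Finset.mem_inter.mp hi).2, j, (Finset.mem_inter.mp hj).2, heq⟩
      -- coefficient of P equals coefficient of A2 * B2
      have hM0 : coeff (0 : Sym2 B →₀ ℕ) M = 1 := const_prod L Lt hconst hrec _
      have hPco : coeff d P = coeff d (A2 * B2) := by
        rw [hPfact, mul_comm M, coeff_mul]
        rw [Finset.sum_eq_single_of_mem ((d, 0) : _ × _)
          (Finset.HasAntidiagonal.mem_antidiagonal.mpr (add_zero d))]
        · rw [hM0, mul_one]
        · intro p hp hne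
          have hps : p.1 + p.2 = d := Finset.HasAntidiagonal.mem_antidiagonal.mp hp
          have h2 : p.2 ≠ 0 := by
            rintro h0
            exact hne (by simp [Prod.ext_iff, h0, ← hps])
          have hsupp : p.2.support ⊆ d.support := by
            rw [← hps, add_comm]
            exact support_subset_add_left p.2 p.1
          rw [hVanM p.2 h2 (not_cross_mono hsupp hcross), mul_zero]
      -- coefficient identity for L S
      have hLS : L S = Lt S * P := by
        rw [hrec]
        exact (Finset.mul_prod_erase _ _ (Finset.mem_powerset_self S)).symm
      have hP0 : coeff (0 : Sym2 B →₀ ℕ) P = 1 := const_prod L Lt hconst hrec _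
      have hLt0 : coeff (0 : Sym2 B →₀ ℕ) (Lt S) = 1 := by
        rw [coeff_zero_eq_constantCoeff_apply]
        exact const_Lt L Lt hconst hrec (S.card + 1) S (Nat.lt_succ_self _)
      have hmid : ∀ a b : Sym2 B →₀ ℕ, a + b = d → a ≠ 0 → b ≠ 0 →
          coeff a (Lt S) * coeff b P = 0 := by
        intro a b hab ha0 hb0
        have hdega : degT a ≤ n := by
          have h3 := degT_add a b
          rw [hab] at h3
          have := one_le_degT hb0
          omega
        have hsupp : a.support ⊆ d.support := hab ▸ support_subset_add_left a b
        rw [ihn a hdega ha0 (not_cross_mono hsupp hcross), zero_mul]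
      have hkey : coeff d (L S) = coeff d (Lt S) + coeff d P := by
        rw [hLS, coeff_mul_two _ _ _ hd0 hmid, hP0, hLt0, mul_one, one_mul]
      have hfa : coeff d (L S) = coeff d (L X * L Y) := by
        have hc : ∀ e ∈ d.support, ¬ ∃ i ∈ X, ∃ j ∈ Y, e = s(i, j) := by
          intro e he hex
          obtain ⟨i, hi, j, hj, rfl⟩ := hex
          exact hcross ⟨_, he, i, hi, j, hj, rfl⟩
        have := hfact X Y hdisj d hc
        rw [hunion] at this
        exact this
      have : coeff d (Lt S) + coeff d (A2 * B2) = coeff d (A2 * B2) := by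
        rw [← hPco, ← hkey, hfa, hLXY]
        exact hPco.symm
      exact add_right_cancel (this.trans (zero_add _).symm)

end Main

lemma exists_cut : ∀ (m : ℕ) (S : Finset B) (E : Finset (Sym2 B)), E.card ≤ m →
    (∀ e ∈ E, ¬ e.IsDiag ∧ ∀ i ∈ e, i ∈ S) → E.card < S.card - 1 →
    ∃ X Y : Finset B, Disjoint X Y ∧ X ∪ Y = S ∧ X.Nonempty ∧ Y.Nonempty ∧
      ∀ e ∈ E, ¬ ∃ i ∈ X, ∃ j ∈ Y, e = s(i, j) := by
  intro m
  induction m with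
  | zero =>
    intro S E hEm hE hlt
    have hE0 : E = ∅ := Finset.card_eq_zero.mp (Nat.le_zero.mp hEm)
    subst hE0
    simp only [Finset.card_empty] at hlt
    have hS2 : 2 ≤ S.card := by omega
    obtain ⟨x, hx⟩ := Finset.card_pos.mp (show 0 < S.card by omega)
    refine ⟨{x}, S.erase x, ?_, ?_, ⟨x, Finset.mem_singleton_self x⟩, ?_, ?_⟩
    · simp
    · rw [← Finset.insert_eq, Finset.insert_erase hx]
    · rw [← Finset.card_pos, Finset.card_erase_of_mem hx]; omega
    · intro e he; simp at he
  | succ m ih =>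
    intro S E hEm hE hlt
    rcases E.eq_empty_or_nonempty with rfl | ⟨e₀, he₀⟩
    · simp only [Finset.card_empty] at hlt
      have hS2 : 2 ≤ S.card := by omega
      obtain ⟨x, hx⟩ := Finset.card_pos.mp (show 0 < S.card by omega)
      refine ⟨{x}, S.erase x, ?_, ?_, ⟨x, Finset.mem_singleton_self x⟩, ?_, ?_⟩
      · simp
      · rw [← Finset.insert_eq, Finset.insert_erase hx]
      · rw [← Finset.card_pos, Finset.card_erase_of_mem hx]; omega
      · intro e he; simp at he
    · obtain ⟨i0, j0, rfl⟩ : ∃ a b, e₀ = s(a, b) := by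
        induction e₀ using Sym2.ind with | _ x y => exact ⟨x, y, rfl⟩
      obtain ⟨hdiag0, hmem0⟩ := hE _ he₀
      have hij : i0 ≠ j0 := fun h => hdiag0 (Sym2.mk_isDiag_iff.mpr h)
      have hi0S : i0 ∈ S := hmem0 i0 (Sym2.mem_mk_left i0 j0)
      have hj0S : j0 ∈ S := hmem0 j0 (Sym2.mem_mk_right i0 j0)
      set f : B → B := fun x => if x = j0 then i0 else x with hf
      set E' : Finset (Sym2 B) := (E.erase s(i0, j0)).image (Sym2.map f) with hE'
      set S' : Finset B := S.erase j0 with hS'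
      have hfj0 : f j0 = i0 := by simp [hf]
      have hfother : ∀ x, x ≠ j0 → f x = x := fun x hx => by simp [hf, hx]
      have hE1 : 1 ≤ E.card := Finset.card_pos.mpr ⟨_, he₀⟩
      have hE'card : E'.card ≤ m := by
        calc E'.card ≤ (E.erase s(i0, j0)).card := Finset.card_image_le
          _ = E.card - 1 := Finset.card_erase_of_mem he₀
          _ ≤ m := by omega
      have hE'prop : ∀ e' ∈ E', ¬ e'.IsDiag ∧ ∀ i ∈ e', i ∈ S' := by
        intro e' he'
        obtain ⟨e, he, rfl⟩ := Finset.mem_image.mp he'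
        have heE : e ∈ E := Finset.mem_of_mem_erase he
        have hene : e ≠ s(i0, j0) := Finset.ne_of_mem_erase he
        obtain ⟨a, b, rfl⟩ : ∃ x y, e = s(x, y) := by
          induction e using Sym2.ind with | _ x y => exact ⟨x, y, rfl⟩
        obtain ⟨hdiag, hmem⟩ := hE _ heE
        have hab : a ≠ b := fun h => hdiag (Sym2.mk_isDiag_iff.mpr h)
        have haS : a ∈ S := hmem a (Sym2.mem_mk_left a b)
        have hbS : b ∈ S := hmem b (Sym2.mem_mk_right a b)
        rw [Sym2.map_pair_eq]
        constructor
        · rw [Sym2.mk_isDiag_iff]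
          intro hfeq
          by_cases ha : a = j0 <;> by_cases hb : b = j0
          · exact hab (ha.trans hb.symm)
          · rw [ha, hfj0, hfother b hb] at hfeq
            exact hene (by rw [ha, ← hfeq]; exact Sym2.eq_swap)
          · rw [hb, hfj0, hfother a ha] at hfeq
            exact hene (by rw [hb, hfeq])
          · rw [hfother a ha, hfother b hb] at hfeq
            exact hab hfeq
        · intro i hi
          rcases Sym2.mem_iff.mp hi with h | h
          · subst h
            by_cases ha : a = j0
            · rw [ha, hfj0]; exact Finset.mem_erase.mpr ⟨hij, hi0S⟩
            · rw [hfother a ha]; exact Finset.mem_erase.mpr ⟨ha, haS⟩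
          · subst h
            by_cases hb : b = j0
            · rw [hb, hfj0]; exact Finset.mem_erase.mpr ⟨hij, hi0S⟩
            · rw [hfother b hb]; exact Finset.mem_erase.mpr ⟨hb, hbS⟩
      have hS'card : S'.card = S.card - 1 := Finset.card_erase_of_mem hj0S
      have hE'lt : E'.card < S'.card - 1 := by
        have h1 : E'.card ≤ E.card - 1 :=
          le_trans Finset.card_image_le (le_of_eq (Finset.card_erase_of_mem he₀))
        omega
      obtain ⟨X', Y', hd', hu', hX', hY', hcr'⟩ := ih S' E' hE'card hE'prop hE'lt
      have hi0S' : i0 ∈ S' := Finset.mem_erase.mpr ⟨hij, hi0S⟩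
      have hX'S' : X' ⊆ S' := hu' ▸ Finset.subset_union_left
      have hY'S' : Y' ⊆ S' := hu' ▸ Finset.subset_union_right
      have hj0X' : j0 ∉ X' := fun h => (Finset.mem_erase.mp (hX'S' h)).1 rfl
      have hj0Y' : j0 ∉ Y' := fun h => (Finset.mem_erase.mp (hY'S' h)).1 rfl
      have hi0XY : i0 ∈ X' ∪ Y' := hu' ▸ hi0S'
      -- helper for crossing contradiction
      have key : ∀ (X Y : Finset B), X = insert j0 X' ∧ Y = Y' ∨ X = X' ∧ Y = insert j0 Y' →
          i0 ∈ (if True then X' else Y') → True := fun _ _ _ _ => trivial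
      rcases Finset.mem_union.mp hi0XY with hi0 | hi0
      · refine ⟨insert j0 X', Y', ?_, ?_, ⟨j0, Finset.mem_insert_self _ _⟩, hY', ?_⟩
        · rw [Finset.disjoint_left]
          intro x hx hxY
          rcases Finset.mem_insert.mp hx with rfl | hx'
          · exact hj0Y' hxY
          · exact (Finset.disjoint_left.mp hd') hx' hxY
        · rw [Finset.insert_union, hu', hS', Finset.insert_erase hj0S]
        · rintro e heE ⟨i, hiX, j, hjY, rfl⟩
          have hjj0 : j ≠ j0 := fun h => hj0Y' (h ▸ hjY)
          by_cases he0 : s(i, j) = s(i0, j0)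
          · rcases Sym2.eq_iff.mp he0 with ⟨hii, hjj⟩ | ⟨hii, hjj⟩
            · exact hjj0 hjj
            · exact (Finset.disjoint_left.mp hd') (hjj ▸ hi0) hjY
          · have hmem' : Sym2.map f s(i, j) ∈ E' :=
              Finset.mem_image_of_mem _ (Finset.mem_erase.mpr ⟨he0, heE⟩)
            rw [Sym2.map_pair_eq, hfother j hjj0] at hmem'
            have hfiX' : f i ∈ X' := by
              rcases Finset.mem_insert.mp hiX with rfl | hi'
              · rw [hfj0]; exact hi0
              · rw [hfother i (fun h => hj0X' (h ▸ hi'))]; exact hi'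
            exact hcr' _ hmem' ⟨f i, hfiX', j, hjY, rfl⟩
      · refine ⟨X', insert j0 Y', ?_, ?_, hX', ⟨j0, Finset.mem_insert_self _ _⟩, ?_⟩
        · rw [Finset.disjoint_left]
          intro x hx hxY
          rcases Finset.mem_insert.mp hxY with rfl | hx'
          · exact hj0X' hx
          · exact (Finset.disjoint_left.mp hd') hx hx'
        · rw [Finset.union_insert, hu', hS', Finset.insert_erase hj0S]
        · rintro e heE ⟨i, hiX, j, hjY, rfl⟩
          have hii0 : i ≠ j0 := fun h => hj0X' (h ▸ hiX)
          by_cases he0 : s(i, j) = s(i0, j0)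
          · rcases Sym2.eq_iff.mp he0 with ⟨hii, hjj⟩ | ⟨hii, hjj⟩
            · exact (Finset.disjoint_left.mp hd') (hii ▸ hiX) hi0
            · exact hii0 hii
          · have hmem' : Sym2.map f s(i, j) ∈ E' :=
              Finset.mem_image_of_mem _ (Finset.mem_erase.mpr ⟨he0, heE⟩)
            rw [Sym2.map_pair_eq, hfother i hii0] at hmem'
            have hfjY' : f j ∈ Y' := by
              rcases Finset.mem_insert.mp hjY with rfl | hj'
              · rw [hfj0]; exact hi0
              · rw [hfother j (fun h => hj0Y' (h ▸ hj'))]; exact hj'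
            exact hcr' _ hmem' ⟨i, hiX, f j, hfjY', rfl⟩

end CCEAux


/-- Degree bound for cluster correlation terms: under the hypotheses of the connectivity
lemma (power series with constant term `1`, variables confined to the cluster, factorable
under disconnected interactions), the cluster correlation term `Lt S` for `|S| = k` equals
a constant plus terms of total degree at least `k - 1` in the pair variables `b_{ij}`:
every nonzero monomial of total degree `< k - 1` has vanishing coefficient. -/
theorem cce_degree_bound {B : Type*} [DecidableEq B]
    (L Lt : Finset B → MvPowerSeries (Sym2 B) ℂ)
    (hconst : ∀ S, MvPowerSeries.constantCoeff (L S) = 1)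
    (hvars : ∀ (S : Finset B) (d : Sym2 B →₀ ℕ),
      MvPowerSeries.coeff d (L S) ≠ 0 → ∀ e ∈ d.support, ∀ i ∈ e, i ∈ S)
    (hfact : ∀ X Y : Finset B, Disjoint X Y →
      ∀ d : Sym2 B →₀ ℕ,
        (∀ e ∈ d.support, ¬ ∃ i ∈ X, ∃ j ∈ Y, e = s(i, j)) →
        MvPowerSeries.coeff d (L (X ∪ Y)) = MvPowerSeries.coeff d (L X * L Y))
    (hrec : ∀ S, L S = ∏ C ∈ S.powerset, Lt C) :
    ∀ (S : Finset B) (d : Sym2 B →₀ ℕ), d ≠ 0 →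
      (d.sum fun _ n => n) < S.card - 1 →
      MvPowerSeries.coeff d (Lt S) = 0 := by
  classical
  intro S d hd0 hdeg
  have hdeg' : CCEAux.degT d < S.card - 1 := hdeg
  by_cases hin : ∀ e ∈ d.support, ∀ i ∈ e, i ∈ S
  · set E := d.support.filter (fun e => ¬ e.IsDiag) with hE
    have hEprop : ∀ e ∈ E, ¬ e.IsDiag ∧ ∀ i ∈ e, i ∈ S := by
      intro e he
      obtain ⟨h1, h2⟩ := Finset.mem_filter.mp he
      exact ⟨h2, hin e h1⟩
    have hElt : E.card < S.card - 1 := by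
      have h1 : E.card ≤ d.support.card := Finset.card_filter_le _ _
      have h2 := CCEAux.support_card_le_degT d
      omega
    obtain ⟨X, Y, hdisj, hunion, hX, hY, hcr⟩ :=
      CCEAux.exists_cut E.card S E le_rfl hEprop hElt
    have hcross : ¬ CCEAux.Cross X Y d := by
      rintro ⟨e, he, i, hi, j, hj, rfl⟩
      have hij : i ≠ j := fun h => (Finset.disjoint_left.mp hdisj) hi (h ▸ hj)
      have heE : s(i, j) ∈ E :=
        Finset.mem_filter.mpr ⟨he, fun h => hij (Sym2.mk_isDiag_iff.mp h)⟩
      exact hcr _ heE ⟨i, hi, j, hj, rfl⟩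
    exact CCEAux.van_Lt L Lt hconst hvars hfact hrec (S.card + 1) S (Nat.lt_succ_self _)
      X Y hdisj hunion hX hY (CCEAux.degT d) d le_rfl hd0 hcross
  · exact CCEAux.conf_Lt L Lt hconst hvars hrec (S.card + 1) S (Nat.lt_succ_self _)
      (CCEAux.degT d) d le_rfl hin
end
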